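/- Let S be a K-algebra with a pseudo-degree function χ, and let a ∈ S be such that C_S(a) satisfies condition D(ℓ) for some ℓ > 0 and χ(a) > 0. Then for every b ∈ C_S(a) there exists a nonzero polynomial P(s,t) ∈ K[s,t] in two commuting variables such that P(a,b) = 0; i.e., a and b are algebraically dependent over K. -/

import Mathlib

open Polynomial

/-- A pseudo-degree function on a ring `S`: a valuation-like map
`χ : S → ℤ ∪ {-∞}` with `χ a = -∞ ↔ a = 0`, `χ (ab) = χ a + χ b` and
`χ (a+b) ≤ max (χ a) (χ b)`. -/
structure IsPseudoDegree {S : Type*} [Ring S] (χ : S → WithBot ℤ) : Prop where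
  eq_bot_iff : ∀ a : S, χ a = ⊥ ↔ a = 0
  map_mul : ∀ a b : S, χ (a * b) = χ a + χ b
  add_le : ∀ a b : S, χ (a + b) ≤ max (χ a) (χ b)

/-- Condition `D(ℓ)` for a subalgebra `B` of `S`: every nonzero element of `B`
has `χ`-value `≥ 0`, and any `ℓ+1` elements of `B` all mapped to the same
integer by `χ` admit a nontrivial `K`-linear combination of strictly smaller
`χ`-value. -/
def CondD {K S : Type*} [Field K] [Ring S] [Algebra K S] (χ : S → WithBot ℤ)
    (B : Subalgebra K S) (ℓ : ℕ) : Prop :=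
  (∀ b ∈ B, b ≠ 0 → 0 ≤ χ b) ∧
  ∀ b : Fin (ℓ + 1) → S, (∀ i, b i ∈ B) → (∀ i, χ (b i) = χ (b 0)) → χ (b 0) ≠ ⊥ →
    ∃ α : Fin (ℓ + 1) → K, α ≠ 0 ∧ χ (∑ i, α i • b i) < χ (b 0)

section Aux

variable {K S : Type*} [Field K] [Ring S] [Algebra K S] {χ : S → WithBot ℤ}

lemma pd_chi_zero (hχ : IsPseudoDegree χ) : χ 0 = ⊥ := (hχ.eq_bot_iff 0).mpr rfl

lemma pd_chi_one (hχ : IsPseudoDegree χ) (hS : (1 : S) ≠ 0) : χ 1 = 0 := by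
  have h := hχ.map_mul 1 1
  rw [mul_one] at h
  obtain ⟨z, hz⟩ := WithBot.ne_bot_iff_exists.mp (fun hb => hS ((hχ.eq_bot_iff 1).mp hb))
  rw [← hz] at h
  have hz' : z = z + z := by exact_mod_cast h
  have : z = 0 := by omega
  rw [← hz, this]; rfl

lemma pd_chi_algebraMap (hχ : IsPseudoDegree χ) (hS : (1 : S) ≠ 0) {B : Subalgebra K S}
    (hB : ∀ b ∈ B, b ≠ 0 → 0 ≤ χ b) {c : K} (hc : c ≠ 0) : χ (c • (1 : S)) = 0 := by
  have hmem : ∀ (d : K), d • (1 : S) ∈ B := by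
    intro d
    rw [← Algebra.algebraMap_eq_smul_one]
    exact B.algebraMap_mem d
  have hne : ∀ (d : K), d ≠ 0 → d • (1 : S) ≠ 0 := by
    intro d hd h
    apply hS
    have := congrArg (fun y => d⁻¹ • y) h
    simpa [smul_smul, inv_mul_cancel₀ hd] using this
  have h1 : (c • (1 : S)) * (c⁻¹ • (1 : S)) = 1 := by
    rw [smul_mul_smul_comm, mul_inv_cancel₀ hc, mul_one, one_smul]
  have h2 := hχ.map_mul (c • (1 : S)) (c⁻¹ • (1 : S))
  rw [h1, pd_chi_one hχ hS] at h2
  have hu := hB _ (hmem c) (hne c hc)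
  have hw := hB _ (hmem c⁻¹) (hne c⁻¹ (inv_ne_zero hc))
  obtain ⟨u, hu'⟩ := WithBot.ne_bot_iff_exists.mp
    (fun hb => hne c hc ((hχ.eq_bot_iff _).mp hb))
  obtain ⟨w, hw'⟩ := WithBot.ne_bot_iff_exists.mp
    (fun hb => hne c⁻¹ (inv_ne_zero hc) ((hχ.eq_bot_iff _).mp hb))
  rw [← hu', ← hw'] at h2
  rw [← hu'] at hu
  rw [← hw'] at hw
  have e1 : (0 : ℤ) = u + w := by exact_mod_cast h2
  have e2 : (0 : ℤ) ≤ u := by exact_mod_cast hu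
  have e3 : (0 : ℤ) ≤ w := by exact_mod_cast hw
  have : u = 0 := by omega
  rw [← hu', this]; rfl

lemma pd_chi_smul_le (hχ : IsPseudoDegree χ) (hS : (1 : S) ≠ 0) {B : Subalgebra K S}
    (hB : ∀ b ∈ B, b ≠ 0 → 0 ≤ χ b) (c : K) (x : S) : χ (c • x) ≤ χ x := by
  rcases eq_or_ne c 0 with rfl | hc
  · rw [zero_smul, pd_chi_zero hχ]; exact bot_le
  · have : c • x = (c • (1 : S)) * x := by rw [smul_mul_assoc, one_mul]
    rw [this, hχ.map_mul, pd_chi_algebraMap hχ hS hB hc, zero_add]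

/-- The submodule of elements of `B` of `χ`-value at most `n`. -/
def degF (hχ : IsPseudoDegree χ) (hS : (1 : S) ≠ 0) {B : Subalgebra K S}
    (hB : ∀ b ∈ B, b ≠ 0 → 0 ≤ χ b) (n : ℤ) : Submodule K S where
  carrier := {x | x ∈ B ∧ χ x ≤ (n : WithBot ℤ)}
  zero_mem' := ⟨B.zero_mem, by rw [pd_chi_zero hχ]; exact bot_le⟩
  add_mem' := fun h1 h2 => ⟨B.add_mem h1.1 h2.1,
    le_trans (hχ.add_le _ _) (max_le h1.2 h2.2)⟩
  smul_mem' := fun c x h => ⟨B.smul_mem h.1 c,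
    le_trans (pd_chi_smul_le hχ hS hB c x) h.2⟩

lemma pd_eq_of_le_not_le {t : WithBot ℤ} {n : ℤ} (h1 : t ≤ (n : WithBot ℤ))
    (h2 : ¬ t ≤ ((n - 1 : ℤ) : WithBot ℤ)) : t = (n : WithBot ℤ) := by
  induction t using WithBot.recBotCoe with
  | bot => exact absurd bot_le h2
  | coe z =>
    have hz1 : z ≤ n := by exact_mod_cast h1
    have hz2 : ¬ z ≤ n - 1 := fun h => h2 (by exact_mod_cast h)
    have : z = n := by omega
    rw [this]

lemma pd_le_pred_of_lt {t : WithBot ℤ} {n : ℤ} (h : t < (n : WithBot ℤ)) :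
    t ≤ ((n - 1 : ℤ) : WithBot ℤ) := by
  induction t using WithBot.recBotCoe with
  | bot => exact bot_le
  | coe z =>
    have hz : z < n := by exact_mod_cast h
    exact_mod_cast (by omega : z ≤ n - 1)

/-- Main dependence lemma: families in `B` of bounded `χ`-value and sufficiently
large cardinality are linearly dependent. -/
lemma pd_dep (hχ : IsPseudoDegree χ) (hS : (1 : S) ≠ 0) {B : Subalgebra K S} {ℓ : ℕ}
    (hD : CondD χ B ℓ) :
    ∀ (n : ℕ) (M : ℕ), ℓ * n + 1 ≤ M → ∀ v : Fin M → S,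
      (∀ i, v i ∈ B) → (∀ i, χ (v i) ≤ ((n : ℤ) - 1 : ℤ)) → ¬ LinearIndependent K v := by
  intro n
  induction n with
  | zero =>
    intro M hM v hvB hvχ hind
    have h0 : (0 : ℕ) < M := by omega
    have hle : χ (v ⟨0, h0⟩) ≤ (((0 : ℤ) - 1 : ℤ) : WithBot ℤ) := by
      simpa using hvχ ⟨0, h0⟩
    have hzero : v ⟨0, h0⟩ = 0 := by
      by_contra hne
      have h1 := hD.1 _ (hvB _) hne
      have : (0 : WithBot ℤ) ≤ (((-1 : ℤ)) : WithBot ℤ) := le_trans h1 (by simpa using hle)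
      exact absurd this (by exact_mod_cast (by omega : ¬ (0:ℤ) ≤ -1))
    exact hind.ne_zero _ hzero
  | succ n ih =>
    intro M hM v hvB hvχ hind
    classical
    set W : Submodule K S := Submodule.span K (Set.range v) with hW
    haveI : FiniteDimensional K W := FiniteDimensional.span_of_finite K (Set.finite_range v)
    have hWle : W ≤ degF hχ hS hD.1 (n : ℤ) := by
      rw [hW, Submodule.span_le]
      rintro _ ⟨i, rfl⟩
      exact ⟨hvB i, by simpa using hvχ i⟩
    set U : Submodule K W := Submodule.comap W.subtype (degF hχ hS hD.1 ((n : ℤ) - 1)) with hU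
    -- Step 1 : the quotient has dimension at most ℓ
    have hQ : Module.finrank K (W ⧸ U) ≤ ℓ := by
      by_contra hQ
      push_neg at hQ
      let bQ := Module.finBasis K (W ⧸ U)
      let y : Fin (ℓ + 1) → (W ⧸ U) := fun k => bQ (Fin.castLE hQ k)
      have hy : LinearIndependent K y :=
        bQ.linearIndependent.comp _ (Fin.castLE_injective hQ)
      choose x hx using fun k => Submodule.Quotient.mk_surjective U (y k)
      have hxB : ∀ k, ((x k : W) : S) ∈ B := fun k => (hWle (x k).2).1
      have hxn : ∀ k, χ ((x k : W) : S) ≤ ((n : ℤ) : WithBot ℤ) := fun k => (hWle (x k).2).2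
      have hxval : ∀ k, χ ((x k : W) : S) = ((n : ℤ) : WithBot ℤ) := by
        intro k
        refine pd_eq_of_le_not_le (hxn k) ?_
        intro hle
        have hmem : x k ∈ U := ⟨hxB k, hle⟩
        have : y k = 0 := by rw [← hx k, Submodule.Quotient.mk_eq_zero]; exact hmem
        exact hy.ne_zero k this
      obtain ⟨α, hα0, hαlt⟩ := hD.2 (fun k => ((x k : W) : S)) hxB
        (fun k => by rw [hxval k, hxval 0]) (by rw [hxval 0]; exact WithBot.coe_ne_bot)
      rw [hxval 0] at hαlt
      have hsum : χ ((↑(∑ k, α k • x k) : S)) ≤ (((n : ℤ) - 1 : ℤ) : WithBot ℤ) := by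
        have : ((↑(∑ k, α k • x k) : S)) = ∑ k, α k • ((x k : W) : S) := by
          push_cast
          rfl
        rw [this]
        exact pd_le_pred_of_lt hαlt
      have hmem : (∑ k, α k • x k) ∈ U := ⟨(hWle (∑ k, α k • x k).2).1, hsum⟩
      have hq0 : (∑ k, α k • y k) = 0 := by
        have h1 : (∑ k, α k • y k) = U.mkQ (∑ k, α k • x k) := by
          rw [map_sum]
          refine Finset.sum_congr rfl fun k _ => ?_
          rw [map_smul, Submodule.mkQ_apply, hx]
        rw [h1, Submodule.mkQ_apply, Submodule.Quotient.mk_eq_zero]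
        exact hmem
      have := Fintype.linearIndependent_iff.mp hy α hq0
      exact hα0 (funext fun k => this k)
    -- Step 2 : finrank of U is large
    have hrank : ℓ * n + 1 ≤ Module.finrank K U := by
      have h1 := Submodule.finrank_quotient_add_finrank U
      have h2 : Module.finrank K W = M := by
        rw [hW, finrank_span_eq_card hind, Fintype.card_fin]
      have h3 : ℓ * (n + 1) = ℓ * n + ℓ := by ring
      omega
    -- Step 3 : contradiction using the inductive hypothesis
    haveI : Module.Free K U := Module.Free.of_divisionRing K U
    let bU := Module.finBasis K U
    let u : Fin (Module.finrank K U) → S := fun k => ((bU k : W) : S)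
    have hu : LinearIndependent K u := by
      have h1 : LinearIndependent K (fun k => ((bU k : W) : S)) := by
        have hi : Function.Injective (W.subtype.comp U.subtype) :=
          W.injective_subtype.comp (f := U.subtype) U.injective_subtype
        have := LinearIndependent.map_injOn bU.linearIndependent (W.subtype.comp U.subtype) hi.injOn
        exact this
      exact h1
    have huB : ∀ k, u k ∈ B := fun k => ((bU k).2 : _ ∈ degF hχ hS hD.1 ((n:ℤ)-1)).1
    have huχ : ∀ k, χ (u k) ≤ ((((n : ℕ) : ℤ) - 1 : ℤ) : WithBot ℤ) := fun k =>
      ((bU k).2 : _ ∈ degF hχ hS hD.1 ((n:ℤ)-1)).2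
    exact ih (Module.finrank K U) hrank u huB huχ hu

end Aux

theorem stmt6 {K S : Type*} [Field K] [Ring S] [Algebra K S]
    (χ : S → WithBot ℤ) (hχ : IsPseudoDegree χ)
    (a : S) (ha : 0 < χ a) (ℓ : ℕ) (hℓ : 0 < ℓ)
    (hD : CondD χ (Subalgebra.centralizer K {a}) ℓ)
    (b : S) (hb : b ∈ Subalgebra.centralizer K {a}) :
    ∃ P : Polynomial (Polynomial K), P ≠ 0 ∧
      Polynomial.eval₂ (Polynomial.aeval a).toRingHom b P = 0 := by
  classical
  have hane : a ≠ 0 := by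
    intro h
    rw [h, pd_chi_zero hχ] at ha
    exact absurd ha (by simp)
  have hS : (1 : S) ≠ 0 := by
    intro h
    exact hane (by rw [← mul_one a, h, mul_zero])
  have haC : a ∈ Subalgebra.centralizer K ({a} : Set S) := by
    rw [Subalgebra.mem_centralizer_iff]
    rintro y hy
    rw [Set.mem_singleton_iff] at hy
    rw [hy]
  obtain ⟨d, hd⟩ := WithBot.ne_bot_iff_exists.mp (ne_bot_of_gt ha)
  have hd0 : 0 < d := by rw [← hd] at ha; exact_mod_cast ha
  rcases eq_or_ne b 0 with rfl | hbne
  · exact ⟨X, X_ne_zero, by rw [eval₂_X]⟩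
  obtain ⟨e, he⟩ := WithBot.ne_bot_iff_exists.mp
    (fun h => hbne ((hχ.eq_bot_iff b).mp h))
  have he0 : 0 ≤ e := by
    have := hD.1 b hb hbne
    rw [← he] at this
    exact_mod_cast this
  -- χ-values of monomials
  have hpa : ∀ i : ℕ, χ (a ^ i) = (((i : ℤ) * d : ℤ) : WithBot ℤ) := by
    intro i
    induction i with
    | zero => simpa using pd_chi_one hχ hS
    | succ i ihp =>
      rw [pow_succ, hχ.map_mul, ihp, ← hd, ← WithBot.coe_add]
      congr 1
      push_cast
      ring
  have hpb : ∀ j : ℕ, χ (b ^ j) = (((j : ℤ) * e : ℤ) : WithBot ℤ) := by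
    intro j
    induction j with
    | zero => simpa using pd_chi_one hχ hS
    | succ j ihp =>
      rw [pow_succ, hχ.map_mul, ihp, ← he, ← WithBot.coe_add]
      congr 1
      push_cast
      ring
  have hgab : ∀ i j : ℕ, χ (a ^ i * b ^ j) = (((i : ℤ) * d + (j : ℤ) * e : ℤ) : WithBot ℤ) := by
    intro i j
    rw [hχ.map_mul, hpa i, hpb j, ← WithBot.coe_add]
  -- choice of sizes
  set D : ℕ := d.toNat with hDdef
  set E : ℕ := e.toNat with hEdef
  have hdD : (D : ℤ) = d := Int.toNat_of_nonneg hd0.le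
  have heE : (E : ℤ) = e := Int.toNat_of_nonneg he0
  set m : ℕ := ℓ * (D + E + 1) with hmdef
  set N : ℕ := m * (D + E) with hNdef
  have hNd : (N : ℤ) = (m : ℤ) * (d + e) := by
    rw [hNdef]
    push_cast
    rw [hdD, heE]
  have hcard : ℓ * (N + 1) + 1 ≤ (m + 1) * (m + 1) := by
    rw [hNdef, hmdef]
    nlinarith [hℓ, sq_nonneg (D + E)]
  -- the monomial family is linearly dependent
  have hndep := pd_dep hχ hS hD (N + 1) ((m + 1) * (m + 1)) hcard
    (fun k => a ^ (((finProdFinEquiv.symm k).1 : Fin (m+1)) : ℕ)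
        * b ^ (((finProdFinEquiv.symm k).2 : Fin (m+1)) : ℕ))
    (fun k => mul_mem (pow_mem haC _) (pow_mem hb _))
    (by
      intro k
      rw [hgab]
      have hi : (((finProdFinEquiv.symm k).1 : Fin (m+1)) : ℕ) ≤ m :=
        Nat.lt_succ_iff.mp (Fin.is_lt _)
      have hj : (((finProdFinEquiv.symm k).2 : Fin (m+1)) : ℕ) ≤ m :=
        Nat.lt_succ_iff.mp (Fin.is_lt _)
      have hi' : ((((finProdFinEquiv.symm k).1 : Fin (m+1)) : ℕ) : ℤ) ≤ (m : ℤ) := by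
        exact_mod_cast hi
      have hj' : ((((finProdFinEquiv.symm k).2 : Fin (m+1)) : ℕ) : ℤ) ≤ (m : ℤ) := by
        exact_mod_cast hj
      have hbound : ((((finProdFinEquiv.symm k).1 : Fin (m+1)) : ℕ) : ℤ) * d
          + ((((finProdFinEquiv.symm k).2 : Fin (m+1)) : ℕ) : ℤ) * e ≤ ((N : ℤ)) := by
        rw [hNd]
        have h1 := mul_le_mul_of_nonneg_right hi' hd0.le
        have h2 := mul_le_mul_of_nonneg_right hj' he0
        nlinarith
      have hgoal : ((((finProdFinEquiv.symm k).1 : Fin (m+1)) : ℕ) : ℤ) * d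
          + ((((finProdFinEquiv.symm k).2 : Fin (m+1)) : ℕ) : ℤ) * e ≤ (((N + 1 : ℕ) : ℤ) - 1 : ℤ) := by
        push_cast
        omega
      exact_mod_cast WithBot.coe_le_coe.mpr hgoal)
  obtain ⟨α, hsum0, k0, hk0⟩ := Fintype.not_linearIndependent_iff.mp hndep
  set β : Fin (m+1) × Fin (m+1) → K := fun p => α (finProdFinEquiv p) with hβdef
  have hβsum : ∑ p : Fin (m+1) × Fin (m+1), β p • (a ^ ((p.1 : Fin (m+1)) : ℕ) * b ^ ((p.2 : Fin (m+1)) : ℕ)) = 0 := by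
    rw [← Equiv.sum_comp finProdFinEquiv.symm
      (fun p : Fin (m+1) × Fin (m+1) => β p • (a ^ ((p.1 : Fin (m+1)) : ℕ) * b ^ ((p.2 : Fin (m+1)) : ℕ)))]
    rw [← hsum0]
    refine Finset.sum_congr rfl fun k _ => ?_
    simp only [hβdef, Equiv.apply_symm_apply]
  set p0 : Fin (m+1) × Fin (m+1) := finProdFinEquiv.symm k0 with hp0def
  have hβp0 : β p0 ≠ 0 := by
    simp only [hβdef, hp0def, Equiv.apply_symm_apply]
    exact hk0
  set P : Polynomial (Polynomial K) :=
    ∑ p : Fin (m+1) × Fin (m+1), monomial ((p.2 : Fin (m+1)) : ℕ) (monomial ((p.1 : Fin (m+1)) : ℕ) (β p)) with hPdef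
  have hcoeff : (P.coeff ((p0.2 : Fin (m+1)) : ℕ)).coeff ((p0.1 : Fin (m+1)) : ℕ) = β p0 := by
    rw [hPdef, finset_sum_coeff, finset_sum_coeff]
    rw [Finset.sum_eq_single p0]
    · simp [coeff_monomial]
    · intro p _ hne
      by_cases h2 : ((p.2 : Fin (m+1)) : ℕ) = ((p0.2 : Fin (m+1)) : ℕ)
      · by_cases h1 : ((p.1 : Fin (m+1)) : ℕ) = ((p0.1 : Fin (m+1)) : ℕ)
        · exact absurd (Prod.ext (Fin.val_injective h1) (Fin.val_injective h2)) hne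
        · simp [coeff_monomial, h1, h2]
      · simp [coeff_monomial, h2]
    · intro h
      exact absurd (Finset.mem_univ p0) h
  have hPne : P ≠ 0 := by
    intro h
    rw [h] at hcoeff
    simp at hcoeff
    exact hβp0 hcoeff.symm
  refine ⟨P, hPne, ?_⟩
  rw [hPdef, eval₂_finset_sum]
  have hterm : ∀ p : Fin (m+1) × Fin (m+1),
      eval₂ (Polynomial.aeval a).toRingHom b
        (monomial ((p.2 : Fin (m+1)) : ℕ) (monomial ((p.1 : Fin (m+1)) : ℕ) (β p)))
      = β p • (a ^ ((p.1 : Fin (m+1)) : ℕ) * b ^ ((p.2 : Fin (m+1)) : ℕ)) := by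
    intro p
    rw [eval₂_monomial]
    have h1 : (Polynomial.aeval a).toRingHom (monomial ((p.1 : Fin (m+1)) : ℕ) (β p))
        = algebraMap K S (β p) * a ^ ((p.1 : Fin (m+1)) : ℕ) := by
      simp [aeval_monomial]
    rw [h1, mul_assoc, ← Algebra.smul_def]
  simp_rw [hterm]
  exact hβsum
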